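/- Let n ≥ 1, i ∈ {1,…,n}, and let A₁, A₂ ⊆ [0,1]^n be disjoint compact subsets, neither of which separates the i-th opposite faces of [0,1]^n. Then A₁ ∪ A₂ does not separate the i-th opposite faces of [0,1]^n. -/

import Mathlib

open Set Metric Filter Complex

def unitCube (n : ℕ) : Set (Fin n → ℝ) := Set.Icc 0 1

def face (n : ℕ) (i : Fin n) (v : ℝ) : Set (Fin n → ℝ) := {x ∈ unitCube n | x i = v}

/-- `A` connects the `i`-th opposite faces of the unit cube: some connected subset of `A`
meets both faces. -/
def Connects (n : ℕ) (i : Fin n) (A : Set (Fin n → ℝ)) : Prop :=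
  ∃ S ⊆ A, IsPreconnected S ∧ (S ∩ face n i 0).Nonempty ∧ (S ∩ face n i 1).Nonempty

/-- `A` separates the `i`-th opposite faces of the unit cube. -/
def Separates (n : ℕ) (i : Fin n) (A : Set (Fin n → ℝ)) : Prop :=
  ¬ Connects n i (unitCube n \ A)

/-- `U` is open in the subspace topology of the unit cube. -/
def OpenInCube (n : ℕ) (U : Set (Fin n → ℝ)) : Prop :=
  ∃ V : Set (Fin n → ℝ), IsOpen V ∧ U = V ∩ unitCube n

/-- piecewise continuity helper: both branches continuous and agreeing at the point. -/
lemma cwa_ite {X B : Type*} [TopologicalSpace X] [PseudoMetricSpace B]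
    {V s : Set X} {e e' : X → B} {x : X} [DecidablePred (· ∈ V)]
    (he : ContinuousWithinAt e s x) (he' : ContinuousWithinAt e' s x)
    (hx : e x = e' x) :
    ContinuousWithinAt (fun y => if y ∈ V then e' y else e y) s x := by
  have hL : (if x ∈ V then e' x else e x) = e x := by
    split_ifs with h
    · exact hx.symm
    · rfl
  have ht : Filter.Tendsto (fun y => if y ∈ V then e' y else e y) (nhdsWithin x s)
      (nhds (e x)) := by
    rw [Metric.tendsto_nhds]
    intro ε hε
    filter_upwards [Metric.tendsto_nhds.1 he ε hε, Metric.tendsto_nhds.1 he' ε hε] with y h1 h2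
    by_cases hy : y ∈ V
    · simpa [hy, hx] using h2
    · simpa [hy] using h1
  show Filter.Tendsto _ _ (nhds (if x ∈ V then e' x else e x))
  rw [hL]
  exact ht

/-- piecewise continuity helper with three possible reasons. -/
lemma cwa_if_cases {X B : Type*} [MetricSpace X] [PseudoMetricSpace B]
    {V s Q : Set X} {e e' : X → B} {x : X} [DecidablePred (· ∈ V)]
    (hsQ : s ⊆ Q) (hx : x ∈ s)
    (he : ContinuousWithinAt e s x) (he' : ContinuousWithinAt e' s x)
    (hcase : (∃ ε > 0, ∀ y ∈ Metric.ball x ε ∩ Q, y ∉ V) ∨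
             (∃ ε > 0, ∀ y ∈ Metric.ball x ε ∩ Q, y ∈ V) ∨ e x = e' x) :
    ContinuousWithinAt (fun y => if y ∈ V then e' y else e y) s x := by
  rcases hcase with ⟨ε, hε, hsub⟩ | ⟨ε, hε, hsub⟩ | heq
  · have hev : (fun y => if y ∈ V then e' y else e y) =ᶠ[nhdsWithin x s] e := by
      filter_upwards [mem_nhdsWithin_of_mem_nhds (Metric.ball_mem_nhds x hε),
        self_mem_nhdsWithin] with y hyb hys
      exact if_neg (hsub y ⟨hyb, hsQ hys⟩)
    exact he.congr_of_eventuallyEq hev (if_neg (hsub x ⟨Metric.mem_ball_self hε, hsQ hx⟩))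
  · have hev : (fun y => if y ∈ V then e' y else e y) =ᶠ[nhdsWithin x s] e' := by
      filter_upwards [mem_nhdsWithin_of_mem_nhds (Metric.ball_mem_nhds x hε),
        self_mem_nhdsWithin] with y hyb hys
      exact if_pos (hsub y ⟨hyb, hsQ hys⟩)
    exact he'.congr_of_eventuallyEq hev (if_pos (hsub x ⟨Metric.mem_ball_self hε, hsQ hx⟩))
  · exact cwa_ite he he' heq

/-- a continuous integer-valued function on a preconnected set is constant. -/
lemma const_of_int_valued {X : Type*} [TopologicalSpace X] {s : Set X} (hs : IsPreconnected s)
    {h : X → ℝ} (hc : ContinuousOn h s) (hv : ∀ x ∈ s, ∃ k : ℤ, h x = k)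
    {x y : X} (hx : x ∈ s) (hy : y ∈ s) : h x = h y := by
  by_contra hne
  wlog hlt : h x < h y generalizing x y
  · exact this hy hx (Ne.symm hne) ((not_lt.1 hlt).lt_of_ne (Ne.symm hne))
  obtain ⟨kx, hkx⟩ := hv x hx
  obtain ⟨ky, hky⟩ := hv y hy
  have hklt : kx < ky := by exact_mod_cast hkx ▸ hky ▸ hlt
  have hmem : ((kx : ℝ) + 1/2) ∈ h '' s := by
    apply (hs.image h hc).Icc_subset (mem_image_of_mem h hx) (mem_image_of_mem h hy)
    rw [mem_Icc, hkx, hky]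
    have : (kx : ℝ) + 1 ≤ ky := by exact_mod_cast hklt
    constructor <;> linarith
  obtain ⟨z, hz, hzv⟩ := hmem
  obtain ⟨k, hk⟩ := hv z hz
  have h2 : (2 * (k - kx) : ℤ) = (1 : ℤ) := by
    have : (2 * ((k : ℝ) - kx)) = 1 := by rw [← hk, hzv]; ring
    exact_mod_cast this
  omega

/-- Hand-rolled lifting of a circle-valued map on the cube through `exp(·*I)`. -/
lemma exists_lift {n : ℕ} {f : (Fin n → ℝ) → ℂ}
    (hf : ContinuousOn f (unitCube n)) (hu : ∀ x ∈ unitCube n, ‖f x‖ = 1) :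
    ∃ g : (Fin n → ℝ) → ℝ, ContinuousOn g (unitCube n) ∧
      ∀ x ∈ unitCube n, Complex.exp ((g x : ℂ) * Complex.I) = f x := by
  have hQc : IsCompact (unitCube n) := isCompact_Icc
  have h0 : (0 : Fin n → ℝ) ∈ unitCube n := Set.mem_Icc.2 ⟨le_rfl, zero_le_one⟩
  have huc := hQc.uniformContinuousOn_of_continuous hf
  rw [Metric.uniformContinuousOn_iff] at huc
  obtain ⟨δ, hδ, hδ'⟩ := huc 1 one_pos
  obtain ⟨m, hm⟩ := exists_nat_gt (1 / δ)
  have hm0 : (0 : ℝ) < m := lt_trans (by positivity) hm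
  set p : ℕ → (Fin n → ℝ) → (Fin n → ℝ) := fun k x => ((k : ℝ) / m) • x with hp
  have hp_mem : ∀ {x : Fin n → ℝ}, x ∈ unitCube n → ∀ {k : ℕ}, k ≤ m → p k x ∈ unitCube n := by
    intro x hx k hk
    rw [unitCube, Set.mem_Icc] at hx ⊢
    have hc0 : (0 : ℝ) ≤ (k : ℝ) / m := div_nonneg (Nat.cast_nonneg k) hm0.le
    have hc1 : (k : ℝ) / m ≤ 1 := (div_le_one hm0).2 (by exact_mod_cast hk)
    constructor <;> intro j
    · have := hx.1 j
      simp only [Pi.smul_apply, smul_eq_mul, Pi.zero_apply] at this ⊢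
      exact mul_nonneg hc0 this
    · have h1 := hx.1 j
      have h2 := hx.2 j
      simp only [Pi.smul_apply, smul_eq_mul, Pi.zero_apply, Pi.one_apply] at h1 h2 ⊢
      exact mul_le_one₀ hc1 h1 h2
  have hnorm : ∀ {x : Fin n → ℝ}, x ∈ unitCube n → ‖x‖ ≤ 1 := by
    intro x hx
    rw [unitCube, Set.mem_Icc] at hx
    apply pi_norm_le_iff_of_nonneg zero_le_one |>.2
    intro j
    have h1 := hx.1 j
    have h2 := hx.2 j
    simp only [Pi.zero_apply, Pi.one_apply] at h1 h2
    rw [Real.norm_eq_abs, abs_le]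
    exact ⟨by linarith, h2⟩
  have hdist : ∀ {x : Fin n → ℝ}, x ∈ unitCube n → ∀ k : ℕ, dist (p (k+1) x) (p k x) < δ := by
    intro x hx k
    have heq : p (k+1) x - p k x = (1 / (m:ℝ)) • x := by
      rw [hp]
      simp only
      rw [← sub_smul]
      congr 1
      push_cast
      field_simp
      ring
    rw [dist_eq_norm, heq, norm_smul]
    have h1m : (1:ℝ)/m < δ := by
      rw [div_lt_iff₀ hm0]
      have := (div_lt_iff₀ hδ).1 hm
      linarith
    calc ‖(1:ℝ)/m‖ * ‖x‖ ≤ (1/m) * 1 := by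
          apply mul_le_mul _ (hnorm hx) (norm_nonneg x) (by positivity)
          rw [Real.norm_eq_abs, abs_of_pos (by positivity)]
      _ < δ := by rwa [mul_one]
  set r : ℕ → (Fin n → ℝ) → ℂ := fun k x => f (p (k+1) x) * (starRingEnd ℂ) (f (p k x)) with hr
  have habs_r : ∀ {x : Fin n → ℝ}, x ∈ unitCube n → ∀ {k : ℕ}, k < m →
      ‖r k x‖ = 1 := by
    intro x hx k hk
    rw [hr]
    simp only [norm_mul, Complex.norm_conj]
    rw [hu _ (hp_mem hx hk), hu _ (hp_mem hx hk.le), mul_one]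
  have h1r : ∀ {x : Fin n → ℝ}, x ∈ unitCube n → ∀ {k : ℕ}, k < m →
      ‖1 - r k x‖ < 1 := by
    intro x hx k hk
    have hid : 1 - r k x = (f (p k x) - f (p (k+1) x)) * (starRingEnd ℂ) (f (p k x)) := by
      rw [hr]
      simp only
      rw [sub_mul, Complex.mul_conj]
      rw [Complex.normSq_eq_norm_sq, hu _ (hp_mem hx hk.le)]
      norm_num
    rw [hid, norm_mul, Complex.norm_conj, hu _ (hp_mem hx hk.le), mul_one, ← Complex.dist_eq]
    exact hδ' _ (hp_mem hx hk.le) _ (hp_mem hx hk) (by rw [dist_comm]; exact hdist hx k)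
  have hslit : ∀ {x : Fin n → ℝ}, x ∈ unitCube n → ∀ {k : ℕ}, k < m →
      r k x ∈ Complex.slitPlane := by
    intro x hx k hk
    rw [Complex.mem_slitPlane_iff]
    left
    have h1 := h1r hx hk
    have h2 : (1 - r k x).re ≤ ‖1 - r k x‖ := Complex.re_le_norm _
    simp only [Complex.sub_re, Complex.one_re] at h2
    linarith
  refine ⟨fun x => Complex.arg (f 0) + ∑ k ∈ Finset.range m, Complex.arg (r k x), ?_, ?_⟩
  · apply ContinuousOn.add continuousOn_const
    apply continuousOn_finset_sum
    intro k hk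
    rw [Finset.mem_range] at hk
    intro x hx
    apply ContinuousAt.comp_continuousWithinAt (Complex.continuousAt_arg (hslit hx hk))
    have hpc : ∀ j : ℕ, j ≤ m → ContinuousWithinAt (fun y => f (p j y)) (unitCube n) x := by
      intro j hj
      have hcj : Continuous (p j) := by simp only [hp]; fun_prop
      have hmaps : MapsTo (p j) (unitCube n) (unitCube n) := fun y hy => hp_mem hy hj
      exact (hf.comp hcj.continuousOn hmaps) x hx
    exact (hpc (k+1) hk).mul
      (Complex.continuous_conj.continuousAt.comp_continuousWithinAt (hpc k hk.le))
  · intro x hx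
    have key : ∀ K : ℕ, K ≤ m →
        Complex.exp ((↑(Complex.arg (f 0) + ∑ k ∈ Finset.range K, Complex.arg (r k x)) : ℂ)
          * Complex.I) = f (p K x) := by
      intro K
      induction K with
      | zero =>
        intro _
        have hp0 : p 0 x = 0 := by rw [hp]; simp
        rw [hp0]
        simp only [Finset.range_zero, Finset.sum_empty, add_zero]
        have := Complex.norm_mul_exp_arg_mul_I (f 0)
        rwa [hu _ h0, Complex.ofReal_one, one_mul] at this
      | succ K ih =>
        intro hK
        have hKm : K < m := hK
        have hsum : (↑(Complex.arg (f 0) + ∑ k ∈ Finset.range (K+1), Complex.arg (r k x)) : ℂ)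
            * Complex.I
            = (↑(Complex.arg (f 0) + ∑ k ∈ Finset.range K, Complex.arg (r k x)) : ℂ) * Complex.I
              + (↑(Complex.arg (r K x)) : ℂ) * Complex.I := by
          rw [Finset.sum_range_succ]
          push_cast
          ring
        rw [hsum, Complex.exp_add, ih hKm.le]
        have hexp_r : Complex.exp ((↑(Complex.arg (r K x)) : ℂ) * Complex.I) = r K x := by
          have := Complex.norm_mul_exp_arg_mul_I (r K x)
          rwa [habs_r hx hKm, Complex.ofReal_one, one_mul] at this
        rw [hexp_r, hr]
        simp only
        rw [show f (p K x) * (f (p (K+1) x) * (starRingEnd ℂ) (f (p K x)))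
            = f (p (K+1) x) * (f (p K x) * (starRingEnd ℂ) (f (p K x))) by ring]
        rw [Complex.mul_conj, Complex.normSq_eq_norm_sq, hu _ (hp_mem hx hKm.le)]
        norm_num
    have hpm : p m x = x := by
      rw [hp]
      simp only
      rw [div_self (ne_of_gt hm0), one_smul]
    have := key m le_rfl
    rwa [hpm] at this
theorem stmt8 {n : ℕ} (i : Fin n) (A₁ A₂ : Set (Fin n → ℝ))
    (h₁ : A₁ ⊆ unitCube n) (h₂ : A₂ ⊆ unitCube n)
    (hc₁ : IsCompact A₁) (hc₂ : IsCompact A₂) (hdisj : Disjoint A₁ A₂)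
    (hn₁ : ¬ Separates n i A₁) (hn₂ : ¬ Separates n i A₂) :
    ¬ Separates n i (A₁ ∪ A₂) := by
  classical
  rcases Set.eq_empty_or_nonempty A₁ with rfl | hne₁
  · rw [Set.empty_union]; exact hn₂
  rcases Set.eq_empty_or_nonempty A₂ with rfl | hne₂
  · rw [Set.union_empty]; exact hn₁
  intro hsep
  have hcon1 : Connects n i (unitCube n \ A₁) := by by_contra h; exact hn₁ h
  have hcon2 : Connects n i (unitCube n \ A₂) := by by_contra h; exact hn₂ h
  obtain ⟨S₁, hS₁W, hS₁c, ⟨x₀, hx₀S, hx₀F⟩, ⟨x₁, hx₁S, hx₁F⟩⟩ := hcon1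
  obtain ⟨S₂, hS₂W, hS₂c, ⟨y₀, hy₀S, hy₀F⟩, ⟨y₁, hy₁S, hy₁F⟩⟩ := hcon2
  set Q : Set (Fin n → ℝ) := unitCube n with hQdef
  set F₀ : Set (Fin n → ℝ) := face n i 0 with hF₀def
  set F₁ : Set (Fin n → ℝ) := face n i 1 with hF₁def
  set A : Set (Fin n → ℝ) := A₁ ∪ A₂ with hAdef
  set W : Set (Fin n → ℝ) := Q \ A with hWdef
  set U : Set (Fin n → ℝ) :=
    {x | x ∈ W ∧ ∃ S, S ⊆ W ∧ IsPreconnected S ∧ x ∈ S ∧ (S ∩ F₀).Nonempty} with hUdef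
  set V : Set (Fin n → ℝ) := W \ U with hVdef
  have hQclosed : IsClosed Q := isClosed_Icc
  have hQconv : Convex ℝ Q := convex_Icc 0 1
  have hF₀Q : F₀ ⊆ Q := fun x hx => hx.1
  have hF₁Q : F₁ ⊆ Q := fun x hx => hx.1
  have hAQ : A ⊆ Q := Set.union_subset h₁ h₂
  have hAclosed : IsClosed A := (hc₁.union hc₂).isClosed
  have hWQ : W ⊆ Q := Set.diff_subset
  have hUW : U ⊆ W := fun x hx => hx.1
  have hVW : V ⊆ W := Set.diff_subset
  have hUVdisj : ∀ x, x ∈ U → x ∉ V := fun x hx hv => hv.2 hx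
  -- convex relative neighborhoods inside W
  have hball : ∀ x ∈ W, ∃ ε > 0, (Metric.ball x ε ∩ Q ⊆ W ∧ Convex ℝ (Metric.ball x ε ∩ Q)) := by
    intro x hx
    obtain ⟨ε, hε, hsub⟩ := Metric.isOpen_iff.1 hAclosed.isOpen_compl x hx.2
    exact ⟨ε, hε, fun y hy => ⟨hy.2, hsub hy.1⟩, (convex_ball x ε).inter hQconv⟩
  have hUopen : ∀ x ∈ U, ∃ ε > 0, Metric.ball x ε ∩ Q ⊆ U := by
    intro x hx
    obtain ⟨hxW, S, hSW, hSc, hxS, hSF⟩ := hx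
    obtain ⟨ε, hε, hsub, hconv⟩ := hball x hxW
    refine ⟨ε, hε, fun y hy => ⟨hsub hy, S ∪ (Metric.ball x ε ∩ Q), ?_, ?_, Or.inr hy, ?_⟩⟩
    · exact Set.union_subset hSW hsub
    · exact hSc.union x hxS ⟨Metric.mem_ball_self hε, hWQ hxW⟩ hconv.isPreconnected
    · obtain ⟨z, hz⟩ := hSF
      exact ⟨z, Or.inl hz.1, hz.2⟩
  have hVopen : ∀ x ∈ V, ∃ ε > 0, Metric.ball x ε ∩ Q ⊆ V := by
    intro x hx
    obtain ⟨ε, hε, hsub, hconv⟩ := hball x (hVW hx)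
    refine ⟨ε, hε, fun y hy => ⟨hsub hy, fun hyU => hx.2 ?_⟩⟩
    obtain ⟨hyW, S, hSW, hSc, hyS, hSF⟩ := hyU
    refine ⟨hVW hx, S ∪ (Metric.ball x ε ∩ Q), Set.union_subset hSW hsub,
      hSc.union y hyS hy hconv.isPreconnected,
      Or.inr ⟨Metric.mem_ball_self hε, hWQ (hVW hx)⟩, ?_⟩
    obtain ⟨z, hz⟩ := hSF
    exact ⟨z, Or.inl hz.1, hz.2⟩
  -- faces vs U, V
  have hF₀V : ∀ x ∈ F₀, x ∉ V := by
    intro x hxF hxV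
    exact hxV.2 ⟨hxV.1, {x}, Set.singleton_subset_iff.2 hxV.1, isPreconnected_singleton,
      rfl, ⟨x, rfl, hxF⟩⟩
  have hF₁U : ∀ x ∈ F₁, x ∉ U := by
    intro x hxF hxU
    obtain ⟨hxW, S, hSW, hSc, hxS, hSF⟩ := hxU
    exact hsep ⟨S, hSW, hSc, hSF, ⟨x, hxS, hxF⟩⟩
  have hWUV : ∀ x ∈ W, x ∈ U ∨ x ∈ V := fun x hx => (em (x ∈ U)).imp id (fun h => ⟨hx, h⟩)
  have hQ_cases : ∀ x ∈ Q, x ∈ U ∨ x ∈ V ∨ x ∈ A := by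
    intro x hx
    by_cases hA : x ∈ A
    · exact Or.inr (Or.inr hA)
    · rcases hWUV x ⟨hx, hA⟩ with h | h
      exacts [Or.inl h, Or.inr (Or.inl h)]
  -- the Urysohn-type function
  have hden : ∀ x, 0 < Metric.infDist x A₁ + Metric.infDist x A₂ := by
    intro x
    by_contra h
    push_neg at h
    have hd1 : (0:ℝ) ≤ Metric.infDist x A₁ := Metric.infDist_nonneg
    have hd2 : (0:ℝ) ≤ Metric.infDist x A₂ := Metric.infDist_nonneg
    have h1 : Metric.infDist x A₁ = 0 := by linarith
    have h2 : Metric.infDist x A₂ = 0 := by linarith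
    have hx1 : x ∈ A₁ := (hc₁.isClosed.mem_iff_infDist_zero hne₁).2 h1
    have hx2 : x ∈ A₂ := (hc₂.isClosed.mem_iff_infDist_zero hne₂).2 h2
    exact Set.disjoint_left.1 hdisj hx1 hx2
  set lam : (Fin n → ℝ) → ℝ :=
    fun x => Real.pi * (Metric.infDist x A₁ / (Metric.infDist x A₁ + Metric.infDist x A₂))
    with hlamdef
  have hlam_cont : Continuous lam := by
    apply continuous_const.mul
    exact (Metric.continuous_infDist_pt A₁).div
      ((Metric.continuous_infDist_pt A₁).add (Metric.continuous_infDist_pt A₂))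
      (fun x => (hden x).ne')
  have hlamA₁ : ∀ x ∈ A₁, lam x = 0 := by
    intro x hx
    rw [hlamdef]
    simp [Metric.infDist_zero_of_mem hx]
  have hlamA₂ : ∀ x ∈ A₂, lam x = Real.pi := by
    intro x hx
    have h2 : Metric.infDist x A₂ = 0 := Metric.infDist_zero_of_mem hx
    have h1 : 0 < Metric.infDist x A₁ := by have := hden x; rwa [h2, add_zero] at this
    rw [hlamdef]
    simp only
    rw [h2, add_zero, div_self h1.ne', mul_one]
  -- the circle-valued map
  set eP : (Fin n → ℝ) → ℂ := fun x => Complex.exp ((lam x : ℂ) * Complex.I) with hePdef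
  set eN : (Fin n → ℝ) → ℂ := fun x => Complex.exp (-(lam x : ℂ) * Complex.I) with heNdef
  set f : (Fin n → ℝ) → ℂ := fun x => if x ∈ V then eN x else eP x with hfdef
  have hePcont : Continuous eP := Complex.continuous_exp.comp
    ((Complex.continuous_ofReal.comp hlam_cont).mul continuous_const)
  have heNcont : Continuous eN := Complex.continuous_exp.comp
    (((Complex.continuous_ofReal.comp hlam_cont).neg).mul continuous_const)
  have hePN_A : ∀ x ∈ A, eP x = eN x := by
    intro x hx
    have hl : lam x = 0 ∨ lam x = Real.pi :=
      hx.elim (fun h => Or.inl (hlamA₁ x h)) (fun h => Or.inr (hlamA₂ x h))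
    rw [hePdef, heNdef]
    simp only
    rcases hl with h | h <;> rw [h]
    · simp
    · rw [neg_mul, Complex.exp_neg, Complex.exp_pi_mul_I]
      norm_num
  have habsf : ∀ x ∈ Q, ‖f x‖ = 1 := by
    intro x _
    rw [hfdef]
    simp only
    split_ifs
    · rw [heNdef]
      simp only
      rw [show -((lam x : ℝ) : ℂ) * Complex.I = ((-lam x : ℝ) : ℂ) * Complex.I by push_cast; ring]
      exact Complex.norm_exp_ofReal_mul_I _
    · exact Complex.norm_exp_ofReal_mul_I _
  have hfcont : ContinuousOn f Q := by
    intro x hx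
    apply cwa_if_cases (le_refl Q) hx hePcont.continuousWithinAt heNcont.continuousWithinAt
    rcases hQ_cases x hx with hU | hV | hA
    · obtain ⟨ε, hε, hsub⟩ := hUopen x hU
      exact Or.inl ⟨ε, hε, fun y hy => hUVdisj y (hsub hy)⟩
    · obtain ⟨ε, hε, hsub⟩ := hVopen x hV
      exact Or.inr (Or.inl ⟨ε, hε, fun y hy => hsub hy⟩)
    · exact Or.inr (Or.inr (hePN_A x hA))
  obtain ⟨g, hgcont, hgf⟩ := exists_lift hfcont habsf
  -- integrality
  have hInt_e : ∀ x ∈ Q, x ∉ V → ∃ k : ℤ, g x - lam x = 2 * Real.pi * k := by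
    intro x hxQ hxV
    have hfx : f x = eP x := if_neg hxV
    have hexp : Complex.exp ((↑(g x - lam x) : ℂ) * Complex.I) = 1 := by
      rw [show ((↑(g x - lam x) : ℂ) * Complex.I)
          = (g x : ℂ) * Complex.I - (lam x : ℂ) * Complex.I by push_cast; ring]
      rw [Complex.exp_sub, hgf x hxQ, hfx, hePdef]
      exact div_self (Complex.exp_ne_zero _)
    obtain ⟨k, hk⟩ := Complex.exp_eq_one_iff.1 hexp
    refine ⟨k, ?_⟩
    have hIc : ((↑(g x - lam x) : ℂ)) = 2 * Real.pi * k := by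
      have h2 : ((↑(g x - lam x) : ℂ)) * Complex.I = ((2 * Real.pi * k : ℂ)) * Complex.I := by
        rw [hk]; ring
      exact mul_right_cancel₀ Complex.I_ne_zero h2
    exact_mod_cast hIc
  have hInt_e' : ∀ x ∈ Q, x ∉ U → ∃ k : ℤ, g x + lam x = 2 * Real.pi * k := by
    intro x hxQ hxU
    by_cases hxV : x ∈ V
    · have hfx : f x = eN x := if_pos hxV
      have hexp : Complex.exp ((↑(g x + lam x) : ℂ) * Complex.I) = 1 := by
        rw [show ((↑(g x + lam x) : ℂ) * Complex.I)
            = (g x : ℂ) * Complex.I - (-(lam x : ℂ)) * Complex.I by push_cast; ring]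
        rw [Complex.exp_sub, hgf x hxQ, hfx, heNdef]
        exact div_self (Complex.exp_ne_zero _)
      obtain ⟨k, hk⟩ := Complex.exp_eq_one_iff.1 hexp
      refine ⟨k, ?_⟩
      have hIc : ((↑(g x + lam x) : ℂ)) = 2 * Real.pi * k := by
        have h2 : ((↑(g x + lam x) : ℂ)) * Complex.I = ((2 * Real.pi * k : ℂ)) * Complex.I := by
          rw [hk]; ring
        exact mul_right_cancel₀ Complex.I_ne_zero h2
      exact_mod_cast hIc
    · have hxA : x ∈ A := by
        by_contra hA
        rcases hWUV x ⟨hxQ, hA⟩ with h | h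
        exacts [hxU h, hxV h]
      obtain ⟨k, hk⟩ := hInt_e x hxQ hxV
      rcases hxA with h | h
      · refine ⟨k, ?_⟩
        rw [hlamA₁ x h] at hk ⊢
        linarith
      · refine ⟨k + 1, ?_⟩
        rw [hlamA₂ x h] at hk ⊢
        push_cast
        linarith
  have hpi : (0:ℝ) < 2 * Real.pi := by have := Real.pi_pos; linarith
  set er : (Fin n → ℝ) → ℝ := fun x => (g x - lam x) / (2 * Real.pi) with herdef
  set er' : (Fin n → ℝ) → ℝ := fun x => (g x + lam x) / (2 * Real.pi) with her'def
  have her_cont : ContinuousOn er Q := (hgcont.sub hlam_cont.continuousOn).div_const _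
  have her'_cont : ContinuousOn er' Q := (hgcont.add hlam_cont.continuousOn).div_const _
  have hInt_er : ∀ x ∈ Q, x ∉ V → ∃ k : ℤ, er x = k := by
    intro x hxQ hxV
    obtain ⟨k, hk⟩ := hInt_e x hxQ hxV
    refine ⟨k, ?_⟩
    rw [herdef]
    simp only
    rw [hk, mul_div_cancel_left₀ _ (ne_of_gt hpi)]
  have hInt_er' : ∀ x ∈ Q, x ∉ U → ∃ k : ℤ, er' x = k := by
    intro x hxQ hxU
    obtain ⟨k, hk⟩ := hInt_e' x hxQ hxU
    refine ⟨k, ?_⟩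
    rw [her'def]
    simp only
    rw [hk, mul_div_cancel_left₀ _ (ne_of_gt hpi)]
  have her_eq_A₁ : ∀ x ∈ A₁, er x = er' x := by
    intro x hx
    rw [herdef, her'def]
    simp only
    rw [hlamA₁ x hx, sub_zero, add_zero]
  have her_eq_A₂ : ∀ x ∈ A₂, er x = er' x - 1 := by
    intro x hx
    rw [herdef, her'def]
    simp only
    rw [hlamA₂ x hx]
    field_simp
    ring
  -- faces are convex hence preconnected
  have hFconv : ∀ v : ℝ, Convex ℝ (face n i v) := by
    intro v x hx y hy a b ha hb hab
    refine ⟨hQconv hx.1 hy.1 ha hb hab, ?_⟩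
    have : (a • x + b • y) i = a * x i + b * y i := by
      simp [Pi.add_apply, Pi.smul_apply, smul_eq_mul]
    rw [this, hx.2, hy.2, ← add_mul, hab, one_mul]
  -- the two integer-valued functions
  set c : (Fin n → ℝ) → ℝ := fun x => if x ∈ V then er' x else er x with hcdef
  set d : (Fin n → ℝ) → ℝ := fun x => if x ∈ V then er' x - 1 else er x with hddef
  have hc_cont : ContinuousOn c (Q \ A₂) := by
    intro x hx
    apply cwa_if_cases Set.diff_subset hx ((her_cont x hx.1).mono Set.diff_subset)
      ((her'_cont x hx.1).mono Set.diff_subset)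
    rcases hQ_cases x hx.1 with hU | hV | hA
    · obtain ⟨ε, hε, hsub⟩ := hUopen x hU
      exact Or.inl ⟨ε, hε, fun y hy => hUVdisj y (hsub hy)⟩
    · obtain ⟨ε, hε, hsub⟩ := hVopen x hV
      exact Or.inr (Or.inl ⟨ε, hε, fun y hy => hsub hy⟩)
    · exact Or.inr (Or.inr (her_eq_A₁ x (hA.resolve_right (fun h => hx.2 h))))
  have hd_cont : ContinuousOn d (Q \ A₁) := by
    intro x hx
    apply cwa_if_cases Set.diff_subset hx ((her_cont x hx.1).mono Set.diff_subset)
      (((her'_cont x hx.1).mono Set.diff_subset).sub continuousWithinAt_const)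
    rcases hQ_cases x hx.1 with hU | hV | hA
    · obtain ⟨ε, hε, hsub⟩ := hUopen x hU
      exact Or.inl ⟨ε, hε, fun y hy => hUVdisj y (hsub hy)⟩
    · obtain ⟨ε, hε, hsub⟩ := hVopen x hV
      exact Or.inr (Or.inl ⟨ε, hε, fun y hy => hsub hy⟩)
    · exact Or.inr (Or.inr (her_eq_A₂ x (hA.resolve_left (fun h => hx.2 h))))
  have hInt_c : ∀ x ∈ Q \ A₂, ∃ k : ℤ, c x = k := by
    intro x hx
    rw [hcdef]
    simp only
    by_cases hV : x ∈ V
    · rw [if_pos hV]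
      exact hInt_er' x hx.1 hV.2
    · rw [if_neg hV]
      exact hInt_er x hx.1 hV
  have hInt_d : ∀ x ∈ Q \ A₁, ∃ k : ℤ, d x = k := by
    intro x hx
    rw [hddef]
    simp only
    by_cases hV : x ∈ V
    · rw [if_pos hV]
      obtain ⟨k, hk⟩ := hInt_er' x hx.1 hV.2
      exact ⟨k - 1, by rw [hk]; push_cast; ring⟩
    · rw [if_neg hV]
      exact hInt_er x hx.1 hV
  -- constancy along the connectors and the faces
  have hc_const : c y₀ = c y₁ :=
    const_of_int_valued hS₂c (hc_cont.mono hS₂W) (fun z hz => hInt_c z (hS₂W hz)) hy₀S hy₁S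
  have hd_const : d x₀ = d x₁ :=
    const_of_int_valued hS₁c (hd_cont.mono hS₁W) (fun z hz => hInt_d z (hS₁W hz)) hx₀S hx₁S
  have hconst₀ : er y₀ = er x₀ :=
    const_of_int_valued (hFconv 0).isPreconnected (her_cont.mono hF₀Q)
      (fun z hz => hInt_er z (hF₀Q hz) (hF₀V z hz)) hy₀F hx₀F
  have hconst₁ : er' x₁ = er' y₁ :=
    const_of_int_valued (hFconv 1).isPreconnected (her'_cont.mono hF₁Q)
      (fun z hz => hInt_er' z (hF₁Q hz) (hF₁U z hz)) hx₁F hy₁F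
  -- evaluations at the face points
  have hcy₀ : c y₀ = er y₀ := if_neg (hF₀V y₀ hy₀F)
  have hcy₁ : c y₁ = er' y₁ := by
    by_cases hV : y₁ ∈ V
    · exact if_pos hV
    · have hyA : y₁ ∈ A := by
        by_contra hA
        rcases hWUV y₁ ⟨hF₁Q hy₁F, hA⟩ with h | h
        exacts [hF₁U y₁ hy₁F h, hV h]
      have hyA₁ : y₁ ∈ A₁ := hyA.resolve_right (fun h => (hS₂W hy₁S).2 h)
      have hcv : c y₁ = er y₁ := if_neg hV
      rw [hcv]
      exact her_eq_A₁ y₁ hyA₁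
  have hdx₀ : d x₀ = er x₀ := if_neg (hF₀V x₀ hx₀F)
  have hdx₁ : d x₁ = er' x₁ - 1 := by
    by_cases hV : x₁ ∈ V
    · exact if_pos hV
    · have hxA : x₁ ∈ A := by
        by_contra hA
        rcases hWUV x₁ ⟨hF₁Q hx₁F, hA⟩ with h | h
        exacts [hF₁U x₁ hx₁F h, hV h]
      have hxA₂ : x₁ ∈ A₂ := hxA.resolve_left (fun h => (hS₁W hx₁S).2 h)
      have hdv : d x₁ = er x₁ := if_neg hV
      rw [hdv]
      exact her_eq_A₂ x₁ hxA₂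
  have e1 : er x₀ = er' x₁ - 1 := by rw [← hdx₀, hd_const, hdx₁]
  have e2 : er y₀ = er' y₁ := by rw [← hcy₀, hc_const, hcy₁]
  linarith [hconst₀, hconst₁, e1, e2]
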